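/- Let V : H → H be a monotone self-adjoint bounded linear operator on a real Hilbert space H. Then ran V is closed if and only if there exists α > 0 such that ⟨Vx, x⟩ ≥ α‖x‖² for all x ∈ ran V. -/

import Mathlib

open RealInnerProductSpace

theorem stmt_0 {H : Type*} [NormedAddCommGroup H] [InnerProductSpace ℝ H] [CompleteSpace H]
    (V : H →L[ℝ] H)
    (hsa : ∀ x y : H, ⟪V x, y⟫ = ⟪x, V y⟫)
    (hmono : ∀ x : H, 0 ≤ ⟪V x, x⟫) :
    IsClosed (Set.range V) ↔ ∃ α > (0:ℝ), ∀ x ∈ Set.range V, α * ‖x‖ ^ 2 ≤ ⟪V x, x⟫ := by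
  classical
  set K : Submodule ℝ H := (LinearMap.range (V : H →ₗ[ℝ] H)).topologicalClosure with hKdef
  haveI : CompleteSpace K := (LinearMap.range (V : H →ₗ[ℝ] H)).isClosed_topologicalClosure.completeSpace_coe
  have hKset : (K : Set H) = closure (Set.range V) := by
    rw [hKdef, Submodule.topologicalClosure_coe, LinearMap.coe_range]; rfl
  have hrangeK : Set.range V ⊆ (K : Set H) := by
    rw [hKset]; exact subset_closure
  -- the orthogonal complement of K is contained in the kernel of V
  have hKperp : ∀ y ∈ Kᗮ, V y = 0 := by
    intro y hy
    have h1 : ⟪V y, V y⟫ = 0 := by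
      rw [hsa, real_inner_comm]
      exact hy _ (Submodule.le_topologicalClosure _ (LinearMap.mem_range_self (V : H →ₗ[ℝ] H) (V y)))
    exact inner_self_eq_zero.mp h1
  -- V x = V (orthogonal projection of x onto K)
  have hVP : ∀ x : H, V x = V ((K.orthogonalProjectionOnto x : K) : H) := by
    intro x
    have h1 : V (x - ((K.orthogonalProjectionOnto x : K) : H)) = 0 :=
      hKperp _ (K.sub_starProjection_mem_orthogonal x)
    rw [map_sub] at h1
    exact sub_eq_zero.mp h1
  -- Cauchy–Schwarz for the positive bilinear form : ⟪V x, y⟫ ^ 2 ≤ ⟪V x, x⟫ * ⟪V y, y⟫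
  have hCS : ∀ x y : H, ⟪V x, y⟫ ^ 2 ≤ ⟪V x, x⟫ * ⟪V y, y⟫ := by
    intro x y
    have hq : ∀ t : ℝ, 0 ≤ ⟪V y, y⟫ * (t * t) + (2 * ⟪V x, y⟫) * t + ⟪V x, x⟫ := by
      intro t
      have h0 : 0 ≤ ⟪V (x + t • y), x + t • y⟫ := hmono _
      have he : ⟪V (x + t • y), x + t • y⟫
          = ⟪V y, y⟫ * (t * t) + (2 * ⟪V x, y⟫) * t + ⟪V x, x⟫ := by
        have hyx : ⟪V y, x⟫ = ⟪V x, y⟫ := by rw [hsa, real_inner_comm]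
        simp only [map_add, map_smul, inner_add_left, inner_add_right,
          real_inner_smul_left, real_inner_smul_right, hyx]
        ring
      linarith [he ▸ h0]
    have hd := discrim_le_zero hq
    rw [discrim] at hd
    nlinarith [hd]
  -- hence ‖V x‖ ^ 2 ≤ ‖V‖ * ⟪V x, x⟫
  have hVbound : ∀ x : H, ‖V x‖ ^ 2 ≤ ‖V‖ * ⟪V x, x⟫ := by
    intro x
    have h1 := hCS x (V x)
    have h2 : ⟪V x, V x⟫ = ‖V x‖ ^ 2 := real_inner_self_eq_norm_sq _
    have h3 : ⟪V (V x), V x⟫ ≤ ‖V‖ * ‖V x‖ * ‖V x‖ := by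
      calc ⟪V (V x), V x⟫ ≤ ‖V (V x)‖ * ‖V x‖ := real_inner_le_norm _ _
        _ ≤ (‖V‖ * ‖V x‖) * ‖V x‖ :=
            mul_le_mul_of_nonneg_right (V.le_opNorm _) (norm_nonneg _)
        _ = ‖V‖ * ‖V x‖ * ‖V x‖ := by ring
    rcases eq_or_lt_of_le (norm_nonneg (V x)) with h4 | h4
    · rw [← h4]
      have := mul_nonneg (norm_nonneg (V : H →L[ℝ] H)) (hmono x)
      nlinarith
    · have h6 : ‖V x‖ ^ 2 * (‖V x‖ * ‖V x‖) ≤ (‖V‖ * ⟪V x, x⟫) * (‖V x‖ * ‖V x‖) := by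
        nlinarith [hmono x, h1, h2, h3]
      exact le_of_mul_le_mul_right h6 (mul_pos h4 h4)
  constructor
  · -- closed range implies coercivity on the range
    intro hclosed
    set R : Submodule ℝ H := LinearMap.range (V : H →ₗ[ℝ] H) with hRdef
    have hRclosed : IsClosed (R : Set H) := by rw [hRdef, LinearMap.coe_range]; exact hclosed
    haveI : CompleteSpace R := hRclosed.completeSpace_coe
    obtain ⟨C, hC0, hbb⟩ : ∃ C : ℝ, 0 ≤ C ∧ ∀ z : K, ‖(z : H)‖ ≤ C * ‖V (z : H)‖ := by
      set W : K →L[ℝ] R :=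
        (V.comp K.subtypeL).codRestrict R (fun z => LinearMap.mem_range_self (V : H →ₗ[ℝ] H) (z : H)) with hWdef
      have hWapp : ∀ z : K, ((W z : H)) = V (z : H) := fun z => rfl
      have hker : LinearMap.ker (W : K →ₗ[ℝ] R) = ⊥ := by
        rw [LinearMap.ker_eq_bot']
        intro z hz
        have hVz : V (z : H) = 0 := by
          have := congrArg (Subtype.val) hz
          simpa [hWapp] using this
        -- (z : H) ∈ K and V z = 0 ⇒ z ⊥ range V ⇒ z ⊥ closure = K ∋ z ⇒ z = 0
        have hperp : Set.range V ⊆ {u : H | ⟪u, (z : H)⟫ = 0} := by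
          rintro _ ⟨w, rfl⟩
          simp only [Set.mem_setOf_eq]
          rw [hsa, hVz, inner_zero_right]
        have hclosed' : IsClosed {u : H | ⟪u, (z : H)⟫ = 0} :=
          isClosed_eq (Continuous.inner continuous_id continuous_const) continuous_const
        have hz' : ((z : H)) ∈ {u : H | ⟪u, (z : H)⟫ = 0} := by
          have hmem : ((z : H)) ∈ closure (Set.range V) := by
            rw [← hKset]; exact z.2
          exact closure_minimal hperp hclosed' hmem
        have : ⟪(z : H), (z : H)⟫ = (0 : ℝ) := hz'
        ext1
        simpa using inner_self_eq_zero.mp this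
      have hsurj : LinearMap.range (W : K →ₗ[ℝ] R) = ⊤ := by
        rw [LinearMap.range_eq_top]
        rintro ⟨u, hu⟩
        obtain ⟨x, rfl⟩ := hu
        refine ⟨K.orthogonalProjectionOnto x, ?_⟩
        ext1
        rw [ContinuousLinearMap.coe_coe, hWapp]
        exact (hVP x).symm
      set e := ContinuousLinearEquiv.ofBijective W hker hsurj with hedef
      refine ⟨‖(e.symm : R →L[ℝ] K)‖, norm_nonneg _, fun z => ?_⟩
      set C : ℝ := ‖(e.symm : R →L[ℝ] K)‖ with hCdef
      have h1 : e.symm (e z) = z := e.symm_apply_apply z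
      have h2 : ‖z‖ = ‖e.symm (e z)‖ := by rw [h1]
      have h3 : ‖e.symm (e z)‖ ≤ C * ‖e z‖ := (e.symm : R →L[ℝ] K).le_opNorm _
      have h4 : ‖e z‖ = ‖V (z : H)‖ := by
        have : e z = W z := by rw [hedef]; rfl
        rw [this]
        show ‖((W z : H))‖ = _
        rw [hWapp]
      have h5 : ‖z‖ = ‖(z : H)‖ := rfl
      rw [← h5, h2]
      rw [h4] at h3
      exact h3
    refine ⟨1 / ((C + 1) ^ 2 * (‖V‖ + 1)), by positivity, ?_⟩
    intro x hx
    have hxK : x ∈ K := hrangeK hx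
    have h1 : ‖x‖ ≤ C * ‖V x‖ := hbb ⟨x, hxK⟩
    have h2 : ‖V x‖ ^ 2 ≤ ‖V‖ * ⟪V x, x⟫ := hVbound x
    have hVn : (0:ℝ) ≤ ‖V‖ := norm_nonneg _
    have hm := hmono x
    rw [div_mul_eq_mul_div, one_mul, div_le_iff₀ (by positivity)]
    nlinarith [norm_nonneg x, norm_nonneg (V x), sq_nonneg (‖x‖ - C * ‖V x‖)]
  · -- coercivity on the range implies closed range
    rintro ⟨α, hα, hbound⟩
    have h1 : ∀ x ∈ Set.range V, α * ‖x‖ ≤ ‖V x‖ := by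
      intro x hx
      have hb := hbound x hx
      have hcs : ⟪V x, x⟫ ≤ ‖V x‖ * ‖x‖ := real_inner_le_norm _ _
      rcases eq_or_lt_of_le (norm_nonneg x) with h | h
      · rw [← h]; simp [norm_nonneg]
      · have : α * ‖x‖ * ‖x‖ ≤ ‖V x‖ * ‖x‖ := by nlinarith
        exact le_of_mul_le_mul_right this h
    have h2 : ∀ x ∈ (K : Set H), α * ‖x‖ ≤ ‖V x‖ := by
      intro x hx
      have hsub : Set.range V ⊆ {u : H | α * ‖u‖ ≤ ‖V u‖} := h1
      have hcl : IsClosed {u : H | α * ‖u‖ ≤ ‖V u‖} :=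
        isClosed_le (continuous_const.mul continuous_norm) (V.continuous.norm)
      have : x ∈ closure (Set.range V) := by rwa [hKset] at hx
      exact closure_minimal hsub hcl this
    set W : K →L[ℝ] H := V.comp K.subtypeL with hWdef
    have hanti : AntilipschitzWith (α⁻¹).toNNReal W := by
      apply W.antilipschitz_of_bound
      intro z
      have hz := h2 (z : H) z.2
      have hc : ((α⁻¹).toNNReal : ℝ) = α⁻¹ := Real.coe_toNNReal _ (le_of_lt (inv_pos.mpr hα))
      rw [hc]
      have hW : W z = V (z : H) := rfl
      rw [hW]
      have h5 : ‖z‖ = ‖(z : H)‖ := rfl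
      rw [h5]
      rw [inv_mul_eq_div, le_div_iff₀ hα, mul_comm]
      exact hz
    have hcl : IsClosed (Set.range W) := hanti.isClosed_range W.uniformContinuous
    have heq : Set.range ⇑W = Set.range ⇑V := by
      ext u
      constructor
      · rintro ⟨z, rfl⟩; exact ⟨(z : H), rfl⟩
      · rintro ⟨x, rfl⟩
        exact ⟨K.orthogonalProjectionOnto x, (hVP x).symm⟩
    rwa [heq] at hcl
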